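/- Inversion of permutation matrices: with M(π) as defined, M(π⁻¹) = M(π)⁻¹ for every permutation π of {1,…,n}. -/

import Mathlib

/-- The extension `π̃` of a permutation `π` of `{1,…,n}` to `{0,1,…,n+1}` fixing `0`
and `n+1`. -/
def permExt (n : ℕ) (π : Equiv.Perm (Fin n)) : ℕ → ℕ := fun k =>
  if h : 1 ≤ k ∧ k ≤ n then (π ⟨k - 1, by omega⟩).val + 1 else k

/-- The `(n+1) × (n+1)` matrix `M(π)`:
`M_{ij} = 1` if `π̃(j−1) < i ≤ π̃(j)`, `M_{ij} = −1` if `π̃(j) < i ≤ π̃(j−1)`, else `0`. -/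
def permMatrix (n : ℕ) (π : Equiv.Perm (Fin n)) :
    Matrix (Fin (n + 1)) (Fin (n + 1)) ℤ := fun i j =>
  if permExt n π j.val < i.val + 1 ∧ i.val + 1 ≤ permExt n π (j.val + 1) then 1
  else if permExt n π (j.val + 1) < i.val + 1 ∧ i.val + 1 ≤ permExt n π j.val then -1
  else 0

lemma permExt_le (n : ℕ) (π : Equiv.Perm (Fin n)) (k : ℕ) (hk : k ≤ n + 1) :
    permExt n π k ≤ n + 1 := by
  unfold permExt
  split_ifs with h
  · have := (π ⟨k - 1, by omega⟩).isLt; omega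
  · exact hk

lemma permExt_inv_permExt (n : ℕ) (π : Equiv.Perm (Fin n)) (m : ℕ) :
    permExt n π⁻¹ (permExt n π m) = m := by
  unfold permExt
  by_cases h : 1 ≤ m ∧ m ≤ n
  · rw [dif_pos h]
    have hb : (π ⟨m - 1, by omega⟩).val < n := (π _).isLt
    rw [dif_pos ⟨by omega, by omega⟩]
    have he : (⟨(π ⟨m - 1, by omega⟩).val + 1 - 1, by omega⟩ : Fin n)
        = π ⟨m - 1, by omega⟩ := by
      ext; simp
    rw [he, Equiv.Perm.inv_def, Equiv.symm_apply_apply]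
    simp; omega
  · rw [dif_neg h, dif_neg h]

lemma permMatrix_apply (n : ℕ) (π : Equiv.Perm (Fin n)) (i j : Fin (n + 1)) :
    permMatrix n π i j =
      (if i.val + 1 ≤ permExt n π (j.val + 1) then (1 : ℤ) else 0)
        - (if i.val + 1 ≤ permExt n π j.val then (1 : ℤ) else 0) := by
  unfold permMatrix
  split_ifs <;> omega

lemma permMatrix_mul_inv (n : ℕ) (π : Equiv.Perm (Fin n)) :
    permMatrix n π⁻¹ * permMatrix n π = 1 := by
  ext i k
  rw [Matrix.mul_apply]
  set g := permExt n π⁻¹ with hg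
  set f := permExt n π with hf
  set t1 := f (k.val + 1) with ht1
  set t0 := f k.val with ht0
  set a : ℕ → ℤ := fun m => if i.val + 1 ≤ g m then 1 else 0 with ha
  set h : ℕ → ℤ := fun m => a (min m t1) - a (min m t0) with hh
  have step1 : ∀ j : Fin (n + 1), permMatrix n π⁻¹ i j * permMatrix n π j k =
      (fun m : ℕ => (a (m + 1) - a m) *
        ((if m + 1 ≤ t1 then (1 : ℤ) else 0) - (if m + 1 ≤ t0 then (1 : ℤ) else 0))) j.val := by
    intro j
    rw [permMatrix_apply, permMatrix_apply]
  rw [Finset.sum_congr rfl (fun j _ => step1 j),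
    Fin.sum_univ_eq_sum_range (fun m : ℕ => (a (m + 1) - a m) *
      ((if m + 1 ≤ t1 then (1 : ℤ) else 0) - (if m + 1 ≤ t0 then (1 : ℤ) else 0))) (n + 1)]
  have tele : ∀ m ∈ Finset.range (n + 1),
      (a (m + 1) - a m) *
        ((if m + 1 ≤ t1 then (1 : ℤ) else 0) - (if m + 1 ≤ t0 then (1 : ℤ) else 0))
      = h (m + 1) - h m := by
    intro m _
    simp only [hh]
    rcases le_or_gt (m + 1) t1 with h1 | h1 <;> rcases le_or_gt (m + 1) t0 with h0 | h0
    · rw [Nat.min_eq_left h1, Nat.min_eq_left (by omega : m ≤ t1),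
        Nat.min_eq_left h0, Nat.min_eq_left (by omega : m ≤ t0)]
      split_ifs <;> omega
    · rw [Nat.min_eq_left h1, Nat.min_eq_left (by omega : m ≤ t1),
        Nat.min_eq_right (by omega : t0 ≤ m + 1), Nat.min_eq_right (by omega : t0 ≤ m)]
      split_ifs <;> omega
    · rw [Nat.min_eq_right (by omega : t1 ≤ m + 1), Nat.min_eq_right (by omega : t1 ≤ m),
        Nat.min_eq_left h0, Nat.min_eq_left (by omega : m ≤ t0)]
      split_ifs <;> omega
    · rw [Nat.min_eq_right (by omega : t1 ≤ m + 1), Nat.min_eq_right (by omega : t1 ≤ m),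
        Nat.min_eq_right (by omega : t0 ≤ m + 1), Nat.min_eq_right (by omega : t0 ≤ m)]
      split_ifs <;> omega
  rw [Finset.sum_congr rfl tele, Finset.sum_range_sub]
  have hb1 : t1 ≤ n + 1 := permExt_le n π (k.val + 1) (by omega)
  have hb0 : t0 ≤ n + 1 := permExt_le n π k.val (by omega)
  have hgt1 : g t1 = k.val + 1 := permExt_inv_permExt n π (k.val + 1)
  have hgt0 : g t0 = k.val := permExt_inv_permExt n π k.val
  have hg0 : g 0 = 0 := by rw [hg]; unfold permExt; simp
  simp only [hh, ha, Nat.min_eq_right hb1, Nat.min_eq_right hb0, Nat.min_eq_left (Nat.zero_le _),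
    Nat.zero_min, hgt1, hgt0, hg0, Matrix.one_apply, Fin.ext_iff]
  split_ifs <;> omega


/-- Inversion of the permutation matrices: `M(π⁻¹) = M(π)⁻¹`. -/
theorem permMatrix_inv (n : ℕ) (π : Equiv.Perm (Fin n)) :
    permMatrix n π⁻¹ = (permMatrix n π)⁻¹ := by
  exact (Matrix.inv_eq_left_inv (permMatrix_mul_inv n π)).symm
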